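/- arXiv:2601.13883 — 2 statements merged into one kernel-verified Lean document; each statement's English description precedes it below -/
import Mathlib

section
/- Assume (i) the reward r_m(s, a_m) of each group m depends only on the state and the group's own action, and is unaffected by the policies of other groups (in particular, the transition dynamics do not depend on actions), and (ii) the total reward decomposes as r(s,a) = ∑_{m=1}^M r_m(s, a_m). Then the joint policy π* = ∏_{m=1}^M π*_m is optimal for the joint discounted-reward maximization problem if and only if each π*_m is optimal for the group-m subproblem of maximizing E_{μ,π}[∑_t γ^t r_m(s_t, a_{t,m}) | π_{1:m−1}] given the policies π*_{1:m−1} of the preceding groups. -/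
section

variable {S : Type*} [Fintype S] {M : ℕ} {A : Fin M → Type*} [∀ m, Fintype (A m)]

/-- A sequential policy: group `m` selects its action conditionally on the state and on
the joint action (restricted below to earlier groups). -/
abbrev SeqPolicy (S : Type*) (A : Fin M → Type*) :=
  (m : Fin M) → S → ((i : Fin M) → A i) → A m → ℝ

/-- The conditioning of group `m` only uses the actions of the first `m-1` groups. -/
def PrefixDep (π : SeqPolicy S A) : Prop :=
  ∀ (m : Fin M) (s : S) (a a' : (i : Fin M) → A i),
    (∀ i : Fin M, i < m → a i = a' i) → π m s a = π m s a'

/-- A valid sequential policy family: prefix-dependent conditional distributions. -/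
def ValidSeq (π : SeqPolicy S A) : Prop :=
  PrefixDep π ∧ (∀ m s a b, 0 ≤ π m s a b) ∧ (∀ m s a, ∑ b : A m, π m s a b = 1)

/-- Induced joint policy `π(a|s) = ∏_m π_m(a_m | s, a_{1:m-1})`. -/
def jointPi (π : SeqPolicy S A) (s : S) (a : (i : Fin M) → A i) : ℝ :=
  ∏ m : Fin M, π m s a (a m)

/-- State marginal at time `t`; the transition kernel `P` does not depend on actions. -/
def sDist (μ : S → ℝ) (P : S → S → ℝ) : ℕ → S → ℝ
  | 0 => μ
  | t + 1 => fun s' => ∑ s : S, sDist μ P t s * P s s'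

/-- Discounted objective of group `m`: `E_{μ,π}[∑_t γ^t r_m(s_t, a_{t,m})]`. -/
noncomputable def Jm (μ : S → ℝ) (P : S → S → ℝ) (γ : ℝ)
    (rm : (m : Fin M) → S → A m → ℝ) (m : Fin M) (π : SeqPolicy S A) : ℝ :=
  ∑' t : ℕ, γ ^ t * ∑ s : S, sDist μ P t s *
    ∑ a : (i : Fin M) → A i, jointPi π s a * rm m s (a m)

/-- Joint discounted objective `E_{μ,π}[∑_t γ^t r(s_t, a_t)]`. -/
noncomputable def J (μ : S → ℝ) (P : S → S → ℝ) (γ : ℝ)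
    (r : S → ((i : Fin M) → A i) → ℝ) (π : SeqPolicy S A) : ℝ :=
  ∑' t : ℕ, γ ^ t * ∑ s : S, sDist μ P t s *
    ∑ a : (i : Fin M) → A i, jointPi π s a * r s a

section Helpers
set_option linter.unusedSectionVars false

lemma double [DecidableEq (Fin M)] (k : Fin M) (g : ((i : Fin M) → A i) → ℝ) :
    ∑ a : (i : Fin M) → A i, ∑ b : A k, g (Function.update a k b)
      = (Fintype.card (A k) : ℝ) * ∑ a : (i : Fin M) → A i, g a := by
  classical
  have h1 : ∑ x : (((i : Fin M) → A i) × A k), g (Function.update x.1 k x.2)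
      = ∑ x : (((i : Fin M) → A i) × A k), g x.1 :=
    Fintype.sum_equiv
      ⟨fun x => (Function.update x.1 k x.2, x.1 k),
       fun x => (Function.update x.1 k x.2, x.1 k),
       fun x => by simp, fun x => by simp⟩ _ _ (fun x => rfl)
  calc ∑ a : (i : Fin M) → A i, ∑ b : A k, g (Function.update a k b)
      = ∑ x : (((i : Fin M) → A i) × A k), g (Function.update x.1 k x.2) := by
        rw [Fintype.sum_prod_type]
    _ = ∑ x : (((i : Fin M) → A i) × A k), g x.1 := h1
    _ = ∑ a : (i : Fin M) → A i, ∑ _b : A k, g a := by rw [Fintype.sum_prod_type]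
    _ = (Fintype.card (A k) : ℝ) * ∑ a : (i : Fin M) → A i, g a := by
        simp [Finset.sum_const, nsmul_eq_mul, Finset.mul_sum]

lemma sum_out (k : Fin M) (p : ((i : Fin M) → A i) → A k → ℝ)
    (hp : ∀ a b b', p (Function.update a k b) b' = p a b')
    (h : ((i : Fin M) → A i) → ℝ) (hh : ∀ a b, h (Function.update a k b) = h a) :
    (Fintype.card (A k) : ℝ) * ∑ a : (i : Fin M) → A i, p a (a k) * h a
      = ∑ a : (i : Fin M) → A i, (∑ b : A k, p a b) * h a := by
  rw [← double k (fun a => p a (a k) * h a)]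
  refine Finset.sum_congr rfl fun a _ => ?_
  rw [Finset.sum_mul]
  refine Finset.sum_congr rfl fun b _ => ?_
  simp [hp, hh]


noncomputable def hyb (π : SeqPolicy S A) (s : S) (n : ℕ) (a : (i : Fin M) → A i) : ℝ :=
  ∏ j : Fin M, if (j : ℕ) < n then π j s a (a j) else (Fintype.card (A j) : ℝ)⁻¹

lemma jointPi_eq_hyb (π : SeqPolicy S A) (s : S) (a : (i : Fin M) → A i) :
    jointPi π s a = hyb π s M a := by
  unfold jointPi hyb
  exact Finset.prod_congr rfl fun j _ => by simp [j.isLt]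

lemma hyb_split (π : SeqPolicy S A) (s : S) (n : ℕ) (hn : n < M) (a : (i : Fin M) → A i) :
    hyb π s (n+1) a
      = π ⟨n, hn⟩ s a (a ⟨n, hn⟩) *
        ∏ j ∈ Finset.univ.erase (⟨n, hn⟩ : Fin M),
          (if (j : ℕ) < n then π j s a (a j) else (Fintype.card (A j) : ℝ)⁻¹) := by
  unfold hyb
  rw [← Finset.mul_prod_erase Finset.univ _ (Finset.mem_univ (⟨n, hn⟩ : Fin M))]
  congr 1
  · simp
  · refine Finset.prod_congr rfl fun j hj => ?_
    have hj' : (j : ℕ) ≠ n := fun h => (Finset.mem_erase.1 hj).1 (Fin.ext h)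
    by_cases h : (j : ℕ) < n
    · simp [h, Nat.lt_succ_of_lt h]
    · have : ¬ (j : ℕ) < n + 1 := by omega
      simp [h, this]

lemma hyb_split' (π : SeqPolicy S A) (s : S) (n : ℕ) (hn : n < M) (a : (i : Fin M) → A i) :
    hyb π s n a
      = (Fintype.card (A (⟨n, hn⟩ : Fin M)) : ℝ)⁻¹ *
        ∏ j ∈ Finset.univ.erase (⟨n, hn⟩ : Fin M),
          (if (j : ℕ) < n then π j s a (a j) else (Fintype.card (A j) : ℝ)⁻¹) := by
  unfold hyb
  rw [← Finset.mul_prod_erase Finset.univ _ (Finset.mem_univ (⟨n, hn⟩ : Fin M))]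
  congr 1
  simp

lemma erase_prod_update (π : SeqPolicy S A) (hπ : PrefixDep π) (s : S) (n : ℕ) (hn : n < M)
    (a : (i : Fin M) → A i) (b : A (⟨n, hn⟩ : Fin M)) :
    (∏ j ∈ Finset.univ.erase (⟨n, hn⟩ : Fin M),
        (if (j : ℕ) < n then π j s (Function.update a ⟨n, hn⟩ b) ((Function.update a ⟨n, hn⟩ b) j)
         else (Fintype.card (A j) : ℝ)⁻¹))
      = ∏ j ∈ Finset.univ.erase (⟨n, hn⟩ : Fin M),
          (if (j : ℕ) < n then π j s a (a j) else (Fintype.card (A j) : ℝ)⁻¹) := by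
  refine Finset.prod_congr rfl fun j hj => ?_
  have hjk : j ≠ (⟨n, hn⟩ : Fin M) := (Finset.mem_erase.1 hj).1
  by_cases h : (j : ℕ) < n
  · have h1 : (Function.update a ⟨n, hn⟩ b) j = a j := Function.update_of_ne hjk _ _
    have h2 : π j s (Function.update a ⟨n, hn⟩ b) = π j s a := by
      refine hπ j s _ _ fun i hi => ?_
      have : i ≠ (⟨n, hn⟩ : Fin M) := by
        intro hik; subst hik
        exact absurd (lt_trans (Fin.lt_def.1 hi) h) (lt_irrefl n)
      exact Function.update_of_ne this _ _
    rw [h1, h2]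
  · simp [h]

lemma pi_update_eq (π : SeqPolicy S A) (hπ : PrefixDep π) (s : S) (k : Fin M)
    (a : (i : Fin M) → A i) (b b' : A k) :
    π k s (Function.update a k b) b' = π k s a b' := by
  have : π k s (Function.update a k b) = π k s a := by
    refine hπ k s _ _ fun i hi => ?_
    exact Function.update_of_ne (ne_of_lt hi) _ _
  rw [this]

lemma hyb_step [∀ i, Nonempty (A i)] (π : SeqPolicy S A) (hπ : ValidSeq π) (s : S)
    (n : ℕ) (hn : n < M) (F : ((i : Fin M) → A i) → ℝ)
    (hF : ∀ a b, F (Function.update a (⟨n, hn⟩ : Fin M) b) = F a) :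
    ∑ a : (i : Fin M) → A i, hyb π s (n+1) a * F a
      = ∑ a : (i : Fin M) → A i, hyb π s n a * F a := by
  set k : Fin M := ⟨n, hn⟩ with hk
  set R : ((i : Fin M) → A i) → ℝ := fun a =>
    ∏ j ∈ Finset.univ.erase k,
      (if (j : ℕ) < n then π j s a (a j) else (Fintype.card (A j) : ℝ)⁻¹) with hR
  have hcard : (0 : ℝ) < (Fintype.card (A k) : ℝ) := by
    exact_mod_cast Fintype.card_pos
  have key := sum_out k (fun a b => π k s a b)
    (fun a b b' => pi_update_eq π hπ.1 s k a b b')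
    (fun a => R a * F a)
    (fun a b => by
      simp only [hR]
      rw [erase_prod_update π hπ.1 s n hn a b, hF a b])
  have hL : ∑ a : (i : Fin M) → A i, hyb π s (n+1) a * F a
      = ∑ a : (i : Fin M) → A i, π k s a (a k) * (R a * F a) := by
    refine Finset.sum_congr rfl fun a _ => ?_
    rw [hyb_split π s n hn a, mul_assoc]
  have hRr : ∑ a : (i : Fin M) → A i, hyb π s n a * F a
      = (Fintype.card (A k) : ℝ)⁻¹ * ∑ a : (i : Fin M) → A i, R a * F a := by
    rw [Finset.mul_sum]
    refine Finset.sum_congr rfl fun a _ => ?_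
    rw [hyb_split' π s n hn a, mul_assoc]
  have hnorm : ∀ a : (i : Fin M) → A i, (∑ b : A k, π k s a b) = 1 := fun a => hπ.2.2 k s a
  rw [hL, hRr]
  have key2 : (Fintype.card (A k) : ℝ) * ∑ a : (i : Fin M) → A i, π k s a (a k) * (R a * F a)
      = ∑ a : (i : Fin M) → A i, R a * F a := by
    rw [key]
    refine Finset.sum_congr rfl fun a _ => ?_
    rw [hnorm a, one_mul]
  rw [← key2, ← mul_assoc, inv_mul_cancel₀ (ne_of_gt hcard), one_mul]


lemma hyb_sum_eq [∀ i, Nonempty (A i)] (π : SeqPolicy S A) (hπ : ValidSeq π) (s : S)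
    (n : ℕ) (F : ((i : Fin M) → A i) → ℝ)
    (hF : ∀ (k : Fin M), n ≤ (k : ℕ) → ∀ a b, F (Function.update a k b) = F a)
    (N : ℕ) (hN : n ≤ N) :
    ∑ a : (i : Fin M) → A i, hyb π s N a * F a
      = ∑ a : (i : Fin M) → A i, hyb π s n a * F a := by
  induction N, hN using Nat.le_induction with
  | base => rfl
  | succ N hnN ih =>
    by_cases hNM : N < M
    · rw [hyb_step π hπ s N hNM F (hF ⟨N, hNM⟩ hnN), ih]
    · have he : hyb π s (N+1) = hyb π s N := by
        funext a; unfold hyb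
        refine Finset.prod_congr rfl fun j _ => ?_
        have h1 : (j : ℕ) < N := lt_of_lt_of_le j.isLt (le_of_not_gt hNM)
        simp [h1, Nat.lt_succ_of_lt h1]
      rw [he, ih]

lemma hyb_zero_sum [∀ i, Nonempty (A i)] (π : SeqPolicy S A) (s : S) :
    ∑ a : (i : Fin M) → A i, hyb π s 0 a = 1 := by
  have h : ∀ a : (i : Fin M) → A i, hyb π s 0 a = ∏ j : Fin M, (Fintype.card (A j) : ℝ)⁻¹ := by
    intro a; unfold hyb; exact Finset.prod_congr rfl fun j _ => by simp
  simp only [h]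
  rw [Finset.sum_const, nsmul_eq_mul, Finset.card_univ, Fintype.card_pi]
  push_cast
  rw [← Finset.prod_mul_distrib]
  refine Finset.prod_eq_one fun j _ => ?_
  have : (0 : ℝ) < (Fintype.card (A j) : ℝ) := by exact_mod_cast Fintype.card_pos
  field_simp

lemma hyb_sum_one [∀ i, Nonempty (A i)] (π : SeqPolicy S A) (hπ : ValidSeq π) (s : S) (n : ℕ) :
    ∑ a : (i : Fin M) → A i, hyb π s n a = 1 := by
  have h := hyb_sum_eq π hπ s 0 (fun _ => (1:ℝ)) (fun _ _ _ _ => rfl) n (Nat.zero_le n)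
  simpa [hyb_zero_sum π s] using h

lemma jointPi_sum_one [∀ i, Nonempty (A i)] (π : SeqPolicy S A) (hπ : ValidSeq π) (s : S) :
    ∑ a : (i : Fin M) → A i, jointPi π s a = 1 := by
  simp only [jointPi_eq_hyb]
  exact hyb_sum_one π hπ s M

lemma jointPi_nonneg (π : SeqPolicy S A) (hπ : ValidSeq π) (s : S) (a : (i : Fin M) → A i) :
    0 ≤ jointPi π s a :=
  Finset.prod_nonneg fun j _ => hπ.2.1 j s a (a j)

lemma marg_reduce [∀ i, Nonempty (A i)] (π : SeqPolicy S A) (hπ : ValidSeq π) (s : S)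
    (m : Fin M) (f : A m → ℝ) :
    ∑ a : (i : Fin M) → A i, jointPi π s a * f (a m)
      = ∑ a : (i : Fin M) → A i, hyb π s ((m : ℕ) + 1) a * f (a m) := by
  simp only [jointPi_eq_hyb]
  exact hyb_sum_eq π hπ s ((m : ℕ) + 1) (fun a => f (a m))
    (fun k hk a b => by
      have hmk : m ≠ k := fun h => by subst h; omega
      show f (Function.update a k b m) = f (a m)
      rw [Function.update_of_ne hmk])
    M m.isLt

lemma inner_agree [∀ i, Nonempty (A i)] (π ρ : SeqPolicy S A) (hπ : ValidSeq π) (hρ : ValidSeq ρ)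
    (s : S) (m : Fin M)
    (hag : ∀ j : Fin M, (j : ℕ) ≤ (m : ℕ) → ∀ a b, π j s a b = ρ j s a b)
    (f : A m → ℝ) :
    ∑ a : (i : Fin M) → A i, jointPi π s a * f (a m)
      = ∑ a : (i : Fin M) → A i, jointPi ρ s a * f (a m) := by
  rw [marg_reduce π hπ s m f, marg_reduce ρ hρ s m f]
  refine Finset.sum_congr rfl fun a _ => ?_
  congr 1
  unfold hyb
  refine Finset.prod_congr rfl fun j _ => ?_
  by_cases h : (j : ℕ) < (m : ℕ) + 1
  · simp only [h, if_true]
    exact hag j (Nat.lt_succ_iff.1 h) a (a j)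
  · simp [h]

lemma inner_const [∀ i, Nonempty (A i)] (π : SeqPolicy S A) (hπ : ValidSeq π) (s : S)
    (m : Fin M) (q : A m → ℝ) (hq : ∀ a b, π m s a b = q b) (f : A m → ℝ) :
    ∑ a : (i : Fin M) → A i, jointPi π s a * f (a m) = ∑ b : A m, q b * f b := by
  have hm : (m : ℕ) < M := m.isLt
  have hmk : (⟨(m : ℕ), hm⟩ : Fin M) = m := Fin.ext rfl
  set R : ((i : Fin M) → A i) → ℝ := fun a =>
    ∏ j ∈ Finset.univ.erase m,
      (if (j : ℕ) < (m : ℕ) then π j s a (a j) else (Fintype.card (A j) : ℝ)⁻¹) with hR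
  have hcard : (0 : ℝ) < (Fintype.card (A m) : ℝ) := by exact_mod_cast Fintype.card_pos
  have hL : ∑ a : (i : Fin M) → A i, jointPi π s a * f (a m)
      = ∑ a : (i : Fin M) → A i, (q (a m) * f (a m)) * R a := by
    rw [marg_reduce π hπ s m f]
    refine Finset.sum_congr rfl fun a _ => ?_
    have := hyb_split π s (m : ℕ) hm a
    rw [hmk] at this
    rw [this, hq a (a m)]
    ring
  have hRupd : ∀ (a : (i : Fin M) → A i) (b : A m), R (Function.update a m b) = R a := by
    intro a b
    have := erase_prod_update π hπ.1 s (m : ℕ) hm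
    rw [hmk] at this
    exact this a b
  have key : (Fintype.card (A m) : ℝ) * ∑ a : (i : Fin M) → A i, (q (a m) * f (a m)) * R a
      = ∑ a : (i : Fin M) → A i, (∑ b : A m, q b * f b) * R a :=
    sum_out m (fun a b => q b * f b) (fun a b b' => rfl) R hRupd
  have hRsum : ∑ a : (i : Fin M) → A i, R a = (Fintype.card (A m) : ℝ) := by
    have h1 : ∑ a : (i : Fin M) → A i, hyb π s (m : ℕ) a = 1 := hyb_sum_one π hπ s (m : ℕ)
    have h2 : ∀ a : (i : Fin M) → A i, hyb π s (m : ℕ) a = (Fintype.card (A m) : ℝ)⁻¹ * R a := by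
      intro a
      have := hyb_split' π s (m : ℕ) hm a
      rw [hmk] at this
      exact this
    simp only [h2, ← Finset.mul_sum] at h1
    field_simp at h1
    linarith
  rw [hL]
  refine mul_left_cancel₀ (ne_of_gt hcard) ?_
  rw [key, ← Finset.mul_sum, hRsum, mul_comm]


open Classical in
noncomputable def qM (π : SeqPolicy S A) (k : Fin M) (s : S) (b : A k) : ℝ :=
  ∑ a : (i : Fin M) → A i, jointPi π s a * (if a k = b then (1:ℝ) else 0)

lemma qM_nonneg (π : SeqPolicy S A) (hπ : ValidSeq π) (k : Fin M) (s : S) (b : A k) :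
    0 ≤ qM π k s b := by
  refine Finset.sum_nonneg fun a _ => mul_nonneg (jointPi_nonneg π hπ s a) ?_
  split <;> norm_num

lemma qM_sum [∀ i, Nonempty (A i)] (π : SeqPolicy S A) (hπ : ValidSeq π) (k : Fin M) (s : S) :
    ∑ b : A k, qM π k s b = 1 := by
  classical
  unfold qM
  rw [Finset.sum_comm]
  have h : ∀ a : (i : Fin M) → A i,
      ∑ b : A k, jointPi π s a * (if a k = b then (1:ℝ) else 0) = jointPi π s a := by
    intro a; rw [← Finset.mul_sum]; simp [Finset.sum_ite_eq]
  rw [Finset.sum_congr rfl fun a _ => h a]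
  exact jointPi_sum_one π hπ s

lemma qM_inner (π : SeqPolicy S A) (k : Fin M) (s : S) (f : A k → ℝ) :
    ∑ b : A k, qM π k s b * f b
      = ∑ a : (i : Fin M) → A i, jointPi π s a * f (a k) := by
  classical
  unfold qM
  simp only [Finset.sum_mul]
  rw [Finset.sum_comm]
  refine Finset.sum_congr rfl fun a _ => ?_
  have h : ∀ b : A k, jointPi π s a * (if a k = b then (1:ℝ) else 0) * f b
      = jointPi π s a * (if a k = b then f b else 0) := by
    intro b; split <;> simp
  rw [Finset.sum_congr rfl fun b _ => h b, ← Finset.mul_sum]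
  simp [Finset.sum_ite_eq]

end Helpers

section Probab
set_option linter.unusedSectionVars false

lemma sDist_nonneg (μ : S → ℝ) (P : S → S → ℝ) (hμ0 : ∀ s, 0 ≤ μ s)
    (hP0 : ∀ s s', 0 ≤ P s s') (t : ℕ) (s : S) : 0 ≤ sDist μ P t s := by
  induction t generalizing s with
  | zero => exact hμ0 s
  | succ t ih =>
    exact Finset.sum_nonneg fun x _ => mul_nonneg (ih x) (hP0 x s)

lemma sDist_sum_one (μ : S → ℝ) (P : S → S → ℝ) (hμ1 : ∑ s : S, μ s = 1)
    (hP1 : ∀ s, ∑ s' : S, P s s' = 1) (t : ℕ) : ∑ s : S, sDist μ P t s = 1 := by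
  induction t with
  | zero => exact hμ1
  | succ t ih =>
    show ∑ s' : S, ∑ s : S, sDist μ P t s * P s s' = 1
    rw [Finset.sum_comm]
    calc ∑ s : S, ∑ s' : S, sDist μ P t s * P s s'
        = ∑ s : S, sDist μ P t s * ∑ s' : S, P s s' := by
          refine Finset.sum_congr rfl fun s _ => ?_; rw [Finset.mul_sum]
      _ = ∑ s : S, sDist μ P t s := by
          refine Finset.sum_congr rfl fun s _ => by rw [hP1 s, mul_one]
      _ = 1 := ih


variable [∀ i, Nonempty (A i)]

lemma inner_abs_le (π : SeqPolicy S A) (hπ : ValidSeq π)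
    (rm : (m : Fin M) → S → A m → ℝ) (m : Fin M) (s : S) :
    |∑ a : (i : Fin M) → A i, jointPi π s a * rm m s (a m)|
      ≤ ∑ s' : S, ∑ b : A m, |rm m s' b| := by
  set B := ∑ s' : S, ∑ b : A m, |rm m s' b| with hB
  have hbound : ∀ a : (i : Fin M) → A i, |rm m s (a m)| ≤ B := by
    intro a
    calc |rm m s (a m)| ≤ ∑ b : A m, |rm m s b| :=
          Finset.single_le_sum (f := fun b : A m => |rm m s b|)
            (fun b _ => abs_nonneg _) (Finset.mem_univ (a m))
      _ ≤ B := Finset.single_le_sum (f := fun s' => ∑ b : A m, |rm m s' b|)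
          (fun s' _ => Finset.sum_nonneg fun b _ => abs_nonneg _) (Finset.mem_univ s)
  calc |∑ a : (i : Fin M) → A i, jointPi π s a * rm m s (a m)|
      ≤ ∑ a : (i : Fin M) → A i, |jointPi π s a * rm m s (a m)| :=
        Finset.abs_sum_le_sum_abs _ _
    _ = ∑ a : (i : Fin M) → A i, jointPi π s a * |rm m s (a m)| := by
        refine Finset.sum_congr rfl fun a _ => ?_
        rw [abs_mul, abs_of_nonneg (jointPi_nonneg π hπ s a)]
    _ ≤ ∑ a : (i : Fin M) → A i, jointPi π s a * B := by
        refine Finset.sum_le_sum fun a _ => ?_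
        exact mul_le_mul_of_nonneg_left (hbound a) (jointPi_nonneg π hπ s a)
    _ = B := by rw [← Finset.sum_mul, jointPi_sum_one π hπ s, one_mul]

lemma summable_Jm_term (μ : S → ℝ) (P : S → S → ℝ) (γ : ℝ)
    (hγ0 : 0 ≤ γ) (hγ1 : γ < 1)
    (hμ0 : ∀ s, 0 ≤ μ s) (hμ1 : ∑ s : S, μ s = 1)
    (hP0 : ∀ s s', 0 ≤ P s s') (hP1 : ∀ s, ∑ s' : S, P s s' = 1)
    (rm : (m : Fin M) → S → A m → ℝ) (m : Fin M) (π : SeqPolicy S A) (hπ : ValidSeq π) :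
    Summable (fun t : ℕ => γ ^ t * ∑ s : S, sDist μ P t s *
      ∑ a : (i : Fin M) → A i, jointPi π s a * rm m s (a m)) := by
  set B := ∑ s' : S, ∑ b : A m, |rm m s' b| with hB
  have hB0 : 0 ≤ B := Finset.sum_nonneg fun s' _ => Finset.sum_nonneg fun b _ => abs_nonneg _
  refine Summable.of_norm_bounded
    ((summable_geometric_of_lt_one hγ0 hγ1).mul_left B) fun t => ?_
  rw [Real.norm_eq_abs, abs_mul, abs_pow, abs_of_nonneg hγ0, mul_comm]
  refine mul_le_mul_of_nonneg_right ?_ (pow_nonneg hγ0 t)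
  calc |∑ s : S, sDist μ P t s * ∑ a : (i : Fin M) → A i, jointPi π s a * rm m s (a m)|
      ≤ ∑ s : S, |sDist μ P t s * ∑ a : (i : Fin M) → A i, jointPi π s a * rm m s (a m)| :=
        Finset.abs_sum_le_sum_abs _ _
    _ = ∑ s : S, sDist μ P t s * |∑ a : (i : Fin M) → A i, jointPi π s a * rm m s (a m)| := by
        refine Finset.sum_congr rfl fun s _ => ?_
        rw [abs_mul, abs_of_nonneg (sDist_nonneg μ P hμ0 hP0 t s)]
    _ ≤ ∑ s : S, sDist μ P t s * B := by
        refine Finset.sum_le_sum fun s _ => ?_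
        exact mul_le_mul_of_nonneg_left (inner_abs_le π hπ rm m s) (sDist_nonneg μ P hμ0 hP0 t s)
    _ = B := by rw [← Finset.sum_mul, sDist_sum_one μ P hμ1 hP1 t, one_mul]

lemma J_eq_sum_Jm (μ : S → ℝ) (P : S → S → ℝ) (γ : ℝ)
    (hγ0 : 0 ≤ γ) (hγ1 : γ < 1)
    (hμ0 : ∀ s, 0 ≤ μ s) (hμ1 : ∑ s : S, μ s = 1)
    (hP0 : ∀ s s', 0 ≤ P s s') (hP1 : ∀ s, ∑ s' : S, P s s' = 1)
    (r : S → ((i : Fin M) → A i) → ℝ) (rm : (m : Fin M) → S → A m → ℝ)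
    (hdecomp : ∀ s a, r s a = ∑ m : Fin M, rm m s (a m))
    (π : SeqPolicy S A) (hπ : ValidSeq π) :
    J μ P γ r π = ∑ m : Fin M, Jm μ P γ rm m π := by
  unfold J Jm
  have hs := Summable.tsum_finsetSum (s := (Finset.univ : Finset (Fin M)))
    (f := fun (m : Fin M) (t : ℕ) => γ ^ t * ∑ s : S, sDist μ P t s *
      ∑ a : (i : Fin M) → A i, jointPi π s a * rm m s (a m))
    (fun m _ => summable_Jm_term μ P γ hγ0 hγ1 hμ0 hμ1 hP0 hP1 rm m π hπ)
  rw [← hs]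
  refine tsum_congr fun t => ?_
  simp only [hdecomp, Finset.mul_sum]
  rw [Finset.sum_congr rfl fun s (_ : s ∈ Finset.univ) => Finset.sum_comm, Finset.sum_comm]

lemma Jm_congr (μ : S → ℝ) (P : S → S → ℝ) (γ : ℝ)
    (rm : (m : Fin M) → S → A m → ℝ) (m : Fin M) (π ρ : SeqPolicy S A)
    (h : ∀ s, ∑ a : (i : Fin M) → A i, jointPi π s a * rm m s (a m)
        = ∑ a : (i : Fin M) → A i, jointPi ρ s a * rm m s (a m)) :
    Jm μ P γ rm m π = Jm μ P γ rm m ρ := by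
  unfold Jm
  refine tsum_congr fun t => ?_
  exact congrArg _ (Finset.sum_congr rfl fun s _ => congrArg _ (h s))

end Probab


/-- Theorem 1, optimality preservation: with action-independent transitions
and additively decomposing reward, `π* = ∏_m π*_m` is optimal for the joint problem iff
each `π*_m` is optimal for the group-`m` subproblem given the preceding groups' policies. -/
theorem optimality_preservation
    [DecidableEq (Fin M)]
    (μ : S → ℝ) (P : S → S → ℝ) (γ : ℝ)
    (hγ0 : 0 ≤ γ) (hγ1 : γ < 1)
    (hμ0 : ∀ s, 0 ≤ μ s) (hμ1 : ∑ s : S, μ s = 1)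
    (hP0 : ∀ s s', 0 ≤ P s s') (hP1 : ∀ s, ∑ s' : S, P s s' = 1)
    (r : S → ((i : Fin M) → A i) → ℝ) (rm : (m : Fin M) → S → A m → ℝ)
    (hdecomp : ∀ s a, r s a = ∑ m : Fin M, rm m s (a m))
    (πstar : SeqPolicy S A) (hstar : ValidSeq πstar) :
    (∀ (m : Fin M) (πm' : S → ((i : Fin M) → A i) → A m → ℝ),
        ValidSeq (Function.update πstar m πm') →
        Jm μ P γ rm m (Function.update πstar m πm') ≤ Jm μ P γ rm m πstar)
      ↔ (∀ π' : SeqPolicy S A, ValidSeq π' → J μ P γ r π' ≤ J μ P γ r πstar) := by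
  rename_i hde
  have hinst : hde = instDecidableEqFin M :=
    funext fun a => funext fun b => Subsingleton.elim _ _
  subst hinst
  by_cases hne : ∀ i, Nonempty (A i)
  · haveI := hne
    constructor
    · -- subproblem optimality → joint optimality
      intro hsub π' hπ'
      have hτ : ∀ k : Fin M, ValidSeq (Function.update πstar k (fun s a b => qM π' k s b)) := by
        intro k
        refine ⟨?_, ?_, ?_⟩
        · intro n s a a' hag
          by_cases hnk : n = k
          · subst hnk; rw [Function.update_self]
          · rw [Function.update_of_ne hnk]; exact hstar.1 n s a a' hag
        · intro n s a b
          by_cases hnk : n = k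
          · subst hnk; rw [Function.update_self]; exact qM_nonneg π' hπ' n s b
          · rw [Function.update_of_ne hnk]; exact hstar.2.1 n s a b
        · intro n s a
          by_cases hnk : n = k
          · subst hnk; rw [Function.update_self]; exact qM_sum π' hπ' n s
          · rw [Function.update_of_ne hnk]; exact hstar.2.2 n s a
      have hle : ∀ k : Fin M, Jm μ P γ rm k π' ≤ Jm μ P γ rm k πstar := by
        intro k
        have h1 : Jm μ P γ rm k (Function.update πstar k (fun s a b => qM π' k s b))
            = Jm μ P γ rm k π' := by
          refine Jm_congr μ P γ rm k _ _ fun s => ?_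
          rw [inner_const (Function.update πstar k fun s a b => qM π' k s b) (hτ k) s k
            (qM π' k s) (fun a b => by rw [Function.update_self]) (rm k s)]
          exact qM_inner π' k s (rm k s)
        calc Jm μ P γ rm k π'
            = Jm μ P γ rm k (Function.update πstar k (fun s a b => qM π' k s b)) := h1.symm
          _ ≤ Jm μ P γ rm k πstar := hsub k _ (hτ k)
      rw [J_eq_sum_Jm μ P γ hγ0 hγ1 hμ0 hμ1 hP0 hP1 r rm hdecomp π' hπ',
        J_eq_sum_Jm μ P γ hγ0 hγ1 hμ0 hμ1 hP0 hP1 r rm hdecomp πstar hstar]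
      exact Finset.sum_le_sum fun k _ => hle k
    · -- joint optimality → subproblem optimality
      intro hJ m πm' hupd
      set σ : SeqPolicy S A := fun k =>
        if (k : ℕ) ≤ (m : ℕ) then Function.update πstar m πm' k
        else fun s a b => qM πstar k s b with hσ
      have hσ_le : ∀ k : Fin M, (k : ℕ) ≤ (m : ℕ) → σ k = Function.update πstar m πm' k := by
        intro k hk; simp only [hσ]; rw [if_pos hk]
      have hσ_gt : ∀ k : Fin M, (m : ℕ) < (k : ℕ) → σ k = fun s a b => qM πstar k s b := by
        intro k hk; simp only [hσ]; rw [if_neg (Nat.not_le.2 hk)]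
      have hσv : ValidSeq σ := by
        refine ⟨?_, ?_, ?_⟩
        · intro k s a a' hag
          rcases le_or_gt (k : ℕ) (m : ℕ) with h | h
          · rw [hσ_le k h]; exact hupd.1 k s a a' hag
          · rw [hσ_gt k h]
        · intro k s a b
          rcases le_or_gt (k : ℕ) (m : ℕ) with h | h
          · rw [hσ_le k h]; exact hupd.2.1 k s a b
          · rw [hσ_gt k h]; exact qM_nonneg πstar hstar k s b
        · intro k s a
          rcases le_or_gt (k : ℕ) (m : ℕ) with h | h
          · rw [hσ_le k h]; exact hupd.2.2 k s a
          · rw [hσ_gt k h]; exact qM_sum πstar hstar k s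
      have hJmm : Jm μ P γ rm m σ = Jm μ P γ rm m (Function.update πstar m πm') :=
        Jm_congr μ P γ rm m _ _ fun s =>
          inner_agree σ (Function.update πstar m πm') hσv hupd s m
            (fun j hj a b => by rw [hσ_le j hj]) (rm m s)
      have hJk : ∀ k : Fin M, k ≠ m → Jm μ P γ rm k σ = Jm μ P γ rm k πstar := by
        intro k hk
        rcases lt_or_gt_of_ne (Fin.val_ne_of_ne hk) with hklt | hkgt
        · refine Jm_congr μ P γ rm k _ _ fun s =>
            inner_agree σ πstar hσv hstar s k (fun j hj a b => ?_) (rm k s)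
          have hjm : j ≠ m := by intro h; rw [h] at hj; omega
          rw [hσ_le j (le_trans hj (le_of_lt hklt)), Function.update_of_ne hjm]
        · refine Jm_congr μ P γ rm k _ _ fun s => ?_
          rw [inner_const σ hσv s k (qM πstar k s) (fun a b => by rw [hσ_gt k hkgt]) (rm k s)]
          exact qM_inner πstar k s (rm k s)
      have hJσ := hJ σ hσv
      rw [J_eq_sum_Jm μ P γ hγ0 hγ1 hμ0 hμ1 hP0 hP1 r rm hdecomp σ hσv,
        J_eq_sum_Jm μ P γ hγ0 hγ1 hμ0 hμ1 hP0 hP1 r rm hdecomp πstar hstar] at hJσ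
      rw [← Finset.add_sum_erase _ (fun k => Jm μ P γ rm k σ) (Finset.mem_univ m),
        ← Finset.add_sum_erase _ (fun k => Jm μ P γ rm k πstar) (Finset.mem_univ m)] at hJσ
      have herase : ∑ k ∈ Finset.univ.erase m, Jm μ P γ rm k σ
          = ∑ k ∈ Finset.univ.erase m, Jm μ P γ rm k πstar :=
        Finset.sum_congr rfl fun k hk => hJk k (Finset.mem_erase.1 hk).1
      rw [herase] at hJσ
      have h2 := (add_le_add_iff_right _).1 hJσ
      rwa [hJmm] at h2
  · push_neg at hne
    obtain ⟨i, hi⟩ := hne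
    have hi : IsEmpty (A i) := by simpa using hi
    haveI : IsEmpty ((i : Fin M) → A i) := ⟨fun a => hi.false (a i)⟩
    have hJm0 : ∀ (k : Fin M) (π : SeqPolicy S A), Jm μ P γ rm k π = 0 := by
      intro k π; unfold Jm; simp
    have hJ0 : ∀ π : SeqPolicy S A, J μ P γ r π = 0 := by
      intro π; unfold J; simp
    constructor
    · intro _ π' _; rw [hJ0, hJ0]
    · intro _ k πm' _; rw [hJm0, hJm0]


end
end

section
/- If a feasible point of the Lagrangian saddle-point problem exists, then for any sequence λ^{(j)} → ∞ componentwise (on constraints with positive cost), the optimizers θ^{(j)} ∈ argmax_θ L(λ^{(j)}, θ) satisfy: every limit point of the induced expected costs E_{d_{π_{θ^{(j)}}}⊗π_{θ^{(j)}}}[c_k] is ≤ 0 for all k; i.e., as the multipliers grow, maximizers of the relaxed problem approach feasibility of the constrained problem. Formally in a finite setting: if the constrained problem max{ J_r(θ) : J_{c_k}(θ) ≤ 0 ∀k } over a finite set Θ of policies is feasible, then there exists Λ such that for all λ with min_k λ_k ≥ Λ, every maximizer of L(λ,·) over Θ is feasible. -/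
/-- finite setting. `Θ` is a finite set of policies, `J_r` the reward
objective, `J_{c_k} ≥ 0` the expected (truncated) costs, and
`L(λ,θ) = J_r(θ) - ∑_k λ_k J_{c_k}(θ)`. If the constrained problem is feasible, then
there exists `Λ` such that for all `λ` with `λ_k ≥ Λ` for every `k`, every maximizer of
`L(λ,·)` over `Θ` is feasible (`J_{c_k}(θ) ≤ 0` for all `k`). -/
theorem large_multipliers_force_feasibility
    {Θ K : Type*} [Fintype Θ] [Nonempty Θ] [Fintype K]
    (Jr : Θ → ℝ) (Jc : K → Θ → ℝ) (hJc : ∀ k θ, 0 ≤ Jc k θ)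
    (hfeas : ∃ θ₀ : Θ, ∀ k, Jc k θ₀ ≤ 0) :
    ∃ Λ : ℝ, ∀ lam : K → ℝ, (∀ k, Λ ≤ lam k) →
      ∀ θ : Θ,
        (∀ θ' : Θ, Jr θ' - ∑ k : K, lam k * Jc k θ' ≤ Jr θ - ∑ k : K, lam k * Jc k θ) →
        ∀ k, Jc k θ ≤ 0 := by
  classical
  obtain ⟨θ₀, hθ₀⟩ := hfeas
  have hzero : ∀ k, Jc k θ₀ = 0 := fun k => le_antisymm (hθ₀ k) (hJc k θ₀)
  set g : Θ × K → ℝ := fun p =>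
    if 0 < Jc p.2 p.1 then (Jr p.1 - Jr θ₀) / Jc p.2 p.1 + 1 else 0 with hg
  refine ⟨∑ p : Θ × K, max 0 (g p), ?_⟩
  intro lam hlam θ hmax k
  by_contra hpos
  push_neg at hpos
  have hJck : 0 < Jc k θ := hpos
  set Λ : ℝ := ∑ p : Θ × K, max 0 (g p)
  have hΛ0 : 0 ≤ Λ := Finset.sum_nonneg fun p _ => le_max_left _ _
  have hΛg : g (θ, k) ≤ Λ := by
    calc g (θ, k) ≤ max 0 (g (θ, k)) := le_max_right _ _
    _ ≤ Λ := Finset.single_le_sum (fun p _ => le_max_left 0 (g p)) (Finset.mem_univ _)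
  have hgval : g (θ, k) = (Jr θ - Jr θ₀) / Jc k θ + 1 := by simp [hg, hJck]
  -- maximizer inequality at θ' = θ₀
  have h1 : Jr θ₀ ≤ Jr θ - ∑ j : K, lam j * Jc j θ := by
    have := hmax θ₀
    simpa [hzero] using this
  -- lower bound on the sum
  have h2 : lam k * Jc k θ ≤ ∑ j : K, lam j * Jc j θ :=
    Finset.single_le_sum (fun j _ => mul_nonneg ((hΛ0.trans (hlam j))) (hJc j θ))
      (Finset.mem_univ k)
  have h3 : Λ * Jc k θ ≤ lam k * Jc k θ :=
    mul_le_mul_of_nonneg_right (hlam k) (hJc k θ)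
  have h4 : Λ * Jc k θ ≤ Jr θ - Jr θ₀ := by linarith
  have h5 : (Jr θ - Jr θ₀) / Jc k θ + 1 ≤ Λ := hgval ▸ hΛg
  have h6 : Jr θ - Jr θ₀ < Λ * Jc k θ := by
    have := (div_le_iff₀ hJck).mp (by linarith : (Jr θ - Jr θ₀) / Jc k θ ≤ Λ - 1)
    nlinarith
  linarith
end
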